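/- Let V be a finite-dimensional complex vector space and T : V → V a linear operator. The collection of c(T)-invariant subspaces of V is closed under subspace sum and intersection, and forms a distributive lattice: for all c(T)-invariant subspaces A, B, C of V, one has A ∩ (B + C) = (A ∩ B) + (A ∩ C). -/

import Mathlib

open Polynomial Module Submodule

noncomputable section StmtAux

variable {V : Type*} [AddCommGroup V] [Module ℂ V]

/-- auxiliary: aeval commutes with T -/
lemma aux_aeval_commute (T : Module.End ℂ V) (f : ℂ[X]) :
    Commute (aeval T f) T := by
  have h : Commute f (X : ℂ[X]) := Commute.all f X
  simpa using h.map (aeval T : ℂ[X] →ₐ[ℂ] Module.End ℂ V)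

section Master

variable (T : Module.End ℂ V)
variable {ι : Type} [Fintype ι] [DecidableEq ι] (lam : ι → ℂ) (d : ι → ℕ) (g : ι → V)

/-- the Jordan-like vectors -/
def auxVV (i : ι) (t : ℕ) : V := aeval T ((X - C (lam i)) ^ t) (g i)

variable (H1 : ∀ (i : ι) (f : ℂ[X]), aeval T f (g i) = 0 ↔ (X - C (lam i)) ^ (d i) ∣ f)

include H1 in
lemma auxVV_zero (i : ι) (t : ℕ) (ht : d i ≤ t) : auxVV T lam g i t = 0 :=
  (H1 i _).mpr (pow_dvd_pow _ ht)

lemma auxVV_succ (i : ι) (t : ℕ) :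
    T (auxVV T lam g i t) = auxVV T lam g i (t + 1) + lam i • auxVV T lam g i t := by
  have h : ((X - C (lam i)) ^ (t+1) : ℂ[X]) = X * (X - C (lam i)) ^ t - C (lam i) * (X - C (lam i)) ^ t := by
    ring
  have h2 : auxVV T lam g i (t+1)
      = T (auxVV T lam g i t) - lam i • auxVV T lam g i t := by
    simp only [auxVV, h, map_sub, map_mul, aeval_X, aeval_C]
    rfl
  rw [h2]; abel

lemma auxVV_shift (i : ι) (s t : ℕ) :
    aeval T ((X - C (lam i)) ^ s) (auxVV T lam g i t) = auxVV T lam g i (s + t) := by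
  simp only [auxVV, ← Module.End.mul_apply, ← map_mul, ← pow_add]

variable (b : Basis (Σ i, Fin (d i)) ℂ V)
variable (hb : ∀ (i : ι) (t : Fin (d i)), b ⟨i, t⟩ = auxVV T lam g i t)

/-- block projections -/
def auxPi (i : ι) : Module.End ℂ V :=
  ∑ t : Fin (d i), (b.coord ⟨i, t⟩).smulRight (b ⟨i, t⟩)

lemma auxPi_apply (i : ι) (v : V) :
    auxPi d b i v = ∑ t : Fin (d i), b.repr v ⟨i, t⟩ • b ⟨i, t⟩ := by
  simp [auxPi, LinearMap.sum_apply, Basis.coord_apply]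

lemma auxPi_basis (i j : ι) (s : Fin (d j)) :
    auxPi d b i (b ⟨j, s⟩) = if j = i then b ⟨j, s⟩ else 0 := by
  classical
  rw [auxPi_apply]
  simp only [Basis.repr_self]
  by_cases h : j = i
  · subst h
    rw [Finset.sum_eq_single s]
    · simp
    · intro t _ hts
      have : (⟨j, s⟩ : Σ i, Fin (d i)) ≠ ⟨j, t⟩ := by
        simp [Sigma.mk.inj_iff]; exact fun hh => hts (by simpa using hh.symm)
      rw [Finsupp.single_eq_of_ne' this, zero_smul]
    · simp
  · rw [if_neg h]
    apply Finset.sum_eq_zero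
    intro t _
    have : (⟨j, s⟩ : Σ i, Fin (d i)) ≠ ⟨i, t⟩ := by
      simp [Sigma.mk.inj_iff]; intro hh; exact absurd hh h
    rw [Finsupp.single_eq_of_ne' this, zero_smul]

include hb H1 in
lemma auxPi_vv (i j : ι) (s : ℕ) :
    auxPi d b i (auxVV T lam g j s) = if j = i then auxVV T lam g j s else 0 := by
  by_cases hs : s < d j
  · have : auxVV T lam g j s = b ⟨j, ⟨s, hs⟩⟩ := (hb j ⟨s, hs⟩).symm
    rw [this, auxPi_basis]
  · have : auxVV T lam g j s = 0 := auxVV_zero T lam d g H1 j s (le_of_not_gt hs)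
    rw [this, map_zero, ite_self]

lemma auxPi_sum (v : V) : ∑ i : ι, auxPi d b i v = v := by
  classical
  conv_rhs => rw [← b.sum_repr v]
  rw [← Finset.univ_sigma_univ, Finset.sum_sigma]
  simp [auxPi_apply]

include hb H1 in
lemma auxPi_commute (i : ι) : Commute (auxPi d b i) T := by
  apply b.ext
  rintro ⟨j, s⟩
  show auxPi d b i (T (b ⟨j, s⟩)) = T (auxPi d b i (b ⟨j, s⟩))
  rw [hb j s, auxVV_succ, map_add, map_smul,
    auxPi_vv T lam d g H1 b hb, auxPi_vv T lam d g H1 b hb]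
  by_cases h : j = i
  · simp only [if_pos h, auxVV_succ]
  · simp [if_neg h]

include H1 hb in
lemma aux_master (W : Submodule ℂ V)
    (hW : ∀ S : Module.End ℂ V, Commute S T → ∀ v ∈ W, S v ∈ W) :
    W = span ℂ (b '' {j | (b j) ∈ W}) := by
  classical
  apply le_antisymm
  · intro v hv
    rw [← auxPi_sum d b v]
    apply Submodule.sum_mem
    intro i _
    by_cases hc : ∀ t : Fin (d i), b.repr v ⟨i, t⟩ = 0
    · rw [auxPi_apply]
      apply Submodule.sum_mem
      intro t _
      rw [hc t, zero_smul]
      exact Submodule.zero_mem _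
    · push_neg at hc
      set Ts : Finset (Fin (d i)) := Finset.univ.filter (fun t => b.repr v ⟨i, t⟩ ≠ 0) with hTsdef
      have hTs : Ts.Nonempty := by
        obtain ⟨t, ht⟩ := hc
        exact ⟨t, by simp [hTsdef, ht]⟩
      set h0 : Fin (d i) := Ts.min' hTs with hh0def
      have hch : b.repr v ⟨i, h0⟩ ≠ 0 := (Finset.mem_filter.mp (Ts.min'_mem hTs)).2
      have hmin : ∀ t ∈ Ts, h0 ≤ t := fun t ht => Ts.min'_le t ht
      set u : ℂ[X] := ∑ t ∈ Ts, C (b.repr v ⟨i, t⟩) * (X - C (lam i)) ^ ((t : ℕ) - (h0 : ℕ)) with hudef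
      have hqu : (X - C (lam i)) ^ (h0 : ℕ) * u
          = ∑ t ∈ Ts, C (b.repr v ⟨i, t⟩) * (X - C (lam i)) ^ (t : ℕ) := by
        rw [hudef, Finset.mul_sum]
        apply Finset.sum_congr rfl
        intro t ht
        rw [mul_left_comm, ← pow_add, Nat.add_sub_cancel' (hmin t ht)]
      have hq : auxPi d b i v = aeval T ((X - C (lam i)) ^ (h0 : ℕ) * u) (g i) := by
        rw [hqu, map_sum, LinearMap.sum_apply, auxPi_apply]
        rw [Finset.sum_subset (Finset.filter_subset _ Finset.univ)]
        · apply Finset.sum_congr rfl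
          intro t _
          rw [hb i t]
          simp only [auxVV, map_mul, aeval_C]
          rfl
        · intro t _ ht
          have : b.repr v ⟨i, t⟩ = 0 := by
            by_contra hne
            exact ht (Finset.mem_filter.mpr ⟨Finset.mem_univ _, hne⟩)
          simp [this]
      have hu : u.eval (lam i) = b.repr v ⟨i, h0⟩ := by
        rw [hudef, eval_finset_sum]
        rw [Finset.sum_eq_single h0]
        · simp
        · intro t ht hth
          have h1 : (h0 : ℕ) < (t : ℕ) := lt_of_le_of_ne (hmin t ht) (by
            intro hee; exact hth (Fin.ext hee.symm ▸ rfl))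
          simp only [eval_mul, eval_pow, eval_sub, eval_X, eval_C, sub_self]
          rw [zero_pow (Nat.sub_ne_zero_of_lt h1), mul_zero]
        · intro hh; exact absurd (Ts.min'_mem hTs) hh
      have hndvd : ¬ (X - C (lam i)) ∣ u := by
        rw [dvd_iff_isRoot]
        intro hroot
        rw [IsRoot.def, hu] at hroot
        exact hch hroot
      have hcop : IsCoprime ((X - C (lam i)) ^ (d i)) u :=
        ((irreducible_X_sub_C (lam i)).coprime_iff_not_dvd.mpr hndvd).pow_left
      obtain ⟨a, s, has⟩ := hcop
      have hπW : auxPi d b i v ∈ W :=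
        hW _ (auxPi_commute T lam d g H1 b hb i) v hv
      have hbh : b ⟨i, h0⟩ ∈ W := by
        have heq : b ⟨i, h0⟩ = aeval T s (auxPi d b i v) := by
          rw [hq, ← Module.End.mul_apply, ← map_mul, hb i h0]
          have e1 : s * ((X - C (lam i)) ^ (h0 : ℕ) * u)
              = (X - C (lam i)) ^ (h0 : ℕ)
                - ((X - C (lam i)) ^ (h0 : ℕ) * a) * (X - C (lam i)) ^ (d i) := by
            linear_combination ((X - C (lam i)) ^ (h0 : ℕ)) * has
          rw [e1, map_sub, LinearMap.sub_apply]
          have e2 : aeval T (((X - C (lam i)) ^ (h0 : ℕ) * a) * (X - C (lam i)) ^ (d i)) (g i) = 0 :=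
            (H1 i _).mpr (dvd_mul_left _ _)
          rw [e2, sub_zero]
          rfl
        rw [heq]
        exact hW _ (aux_aeval_commute T s) _ hπW
      have hbt : ∀ t : Fin (d i), (h0 : ℕ) ≤ (t : ℕ) → b ⟨i, t⟩ ∈ W := by
        intro t ht
        have heq : b ⟨i, t⟩ = aeval T ((X - C (lam i)) ^ ((t : ℕ) - (h0 : ℕ))) (b ⟨i, h0⟩) := by
          rw [hb i t, hb i h0, auxVV_shift, Nat.sub_add_cancel ht]
        rw [heq]
        exact hW _ (aux_aeval_commute T _) _ hbh
      rw [auxPi_apply]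
      apply Submodule.sum_mem
      intro t _
      by_cases hct : b.repr v ⟨i, t⟩ = 0
      · rw [hct, zero_smul]; exact Submodule.zero_mem _
      · apply Submodule.smul_mem
        apply Submodule.subset_span
        exact ⟨⟨i, t⟩, hbt t (hmin t (Finset.mem_filter.mpr ⟨Finset.mem_univ _, hct⟩)), rfl⟩
  · rw [Submodule.span_le]
    rintro x ⟨j, hj, rfl⟩
    exact hj

end Master

lemma aux_blockBasis (l : ℂ) (r : ℂ[X]) (D : ℕ) (hassoc : Associated ((X - C l) ^ D) r) :
    ∃ bQ : Basis (Fin D) ℂ (ℂ[X] ⧸ (ℂ[X] ∙ r)),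
      ∀ t : Fin D, bQ t = Submodule.Quotient.mk ((X - C l) ^ (t : ℕ)) := by
  classical
  set Q := ℂ[X] ⧸ (ℂ[X] ∙ r) with hQ
  let mkl : ℂ[X] →ₗ[ℂ] Q := (Submodule.mkQ _).restrictScalars ℂ
  have hmkl : ∀ f : ℂ[X], mkl f = Submodule.Quotient.mk f := fun f => rfl
  have hdvd_iff : ∀ f : ℂ[X], (Submodule.Quotient.mk f : Q) = 0 ↔ (X - C l) ^ D ∣ f := by
    intro f
    rw [Submodule.Quotient.mk_eq_zero, Submodule.mem_span_singleton]
    constructor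
    · rintro ⟨a, rfl⟩
      rw [smul_eq_mul]
      exact (hassoc.dvd_iff_dvd_left).mpr (dvd_mul_left r a)
    · intro hdv
      obtain ⟨c, hc⟩ := (hassoc.dvd_iff_dvd_left).mp hdv
      exact ⟨c, by rw [hc, smul_eq_mul, mul_comm]⟩
  have hindep : LinearIndependent ℂ (fun t : Fin D => mkl ((X - C l) ^ (t : ℕ))) := by
    rw [Fintype.linearIndependent_iff]
    intro cf hcf
    have hG : mkl (∑ t : Fin D, cf t • (X - C l) ^ (t : ℕ)) = 0 := by
      rw [map_sum]
      simpa only [map_smul] using hcf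
    set G : ℂ[X] := ∑ t : Fin D, cf t • (X - C l) ^ (t : ℕ) with hGdef
    have hGdvd : (X - C l) ^ D ∣ G := by
      rw [hmkl] at hG
      exact (hdvd_iff G).mp hG
    have hG0 : G = 0 := by
      rcases Nat.eq_zero_or_pos D with hD | hDpos
      · rw [hGdef]
        exact Finset.sum_eq_zero (fun t _ => absurd t.isLt (by omega))
      by_contra hne
      have h1 : D ≤ G.natDegree := by
        have := Polynomial.natDegree_le_of_dvd hGdvd hne
        simpa [natDegree_pow, natDegree_X_sub_C] using this
      have h2 : G.natDegree ≤ D - 1 := by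
        apply Polynomial.natDegree_sum_le_of_forall_le
        intro t _
        refine le_trans (Polynomial.natDegree_smul_le _ _) ?_
        rw [natDegree_pow, natDegree_X_sub_C, mul_one]
        exact Nat.le_sub_one_of_lt t.isLt
      omega
    intro t
    have htay : ∑ t : Fin D, cf t • (X : ℂ[X]) ^ (t : ℕ) = 0 := by
      have := congrArg (Polynomial.taylor l) hG0
      rw [map_sum, map_zero] at this
      simpa only [map_smul, Polynomial.taylor_apply, Polynomial.pow_comp, Polynomial.sub_comp,
        Polynomial.X_comp, Polynomial.C_comp, add_sub_cancel_right] using this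
    have := congrArg (fun q : ℂ[X] => q.coeff (t : ℕ)) htay
    simp only [Polynomial.finset_sum_coeff, Polynomial.coeff_smul, Polynomial.coeff_X_pow,
      Polynomial.coeff_zero, smul_eq_mul] at this
    rw [Finset.sum_eq_single t] at this
    · simpa using this
    · intro s _ hst
      rw [if_neg (fun h => hst (Fin.val_injective h).symm), mul_zero]
    · intro h; exact absurd (Finset.mem_univ t) h
  have hspan : ⊤ ≤ span ℂ (Set.range (fun t : Fin D => mkl ((X - C l) ^ (t : ℕ)))) := by
    rintro x -
    obtain ⟨f, rfl⟩ := Submodule.Quotient.mk_surjective _ x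
    rw [← Polynomial.sum_taylor_eq f l]
    rw [Polynomial.sum_def, ← hmkl, map_sum]
    apply Submodule.sum_mem
    intro t _
    rw [← Polynomial.smul_eq_C_mul, map_smul]
    by_cases ht : t < D
    · exact Submodule.smul_mem _ _ (Submodule.subset_span ⟨⟨t, ht⟩, rfl⟩)
    · have : mkl ((X - C l) ^ t) = 0 := by
        rw [hmkl, hdvd_iff]
        exact pow_dvd_pow _ (le_of_not_gt ht)
      rw [this, smul_zero]
      exact Submodule.zero_mem _
  exact ⟨Basis.mk hindep hspan, fun t => by rw [Basis.mk_apply]; rfl⟩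

lemma aux_exists (V : Type*) [AddCommGroup V] [Module ℂ V] [FiniteDimensional ℂ V]
    (T : Module.End ℂ V) :
    ∃ (ι : Type) (_ : Fintype ι) (_ : DecidableEq ι) (lam : ι → ℂ) (d : ι → ℕ) (g : ι → V)
      (b : Basis (Σ i, Fin (d i)) ℂ V),
      (∀ (i : ι) (t : Fin (d i)), b ⟨i, t⟩ = auxVV T lam g i t) ∧
      (∀ (i : ι) (f : ℂ[X]), aeval T f (g i) = 0 ↔ (X - C (lam i)) ^ (d i) ∣ f) := by
  classical
  have htor : Module.IsTorsion ℂ[X] (Module.AEval' T) :=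
    Module.AEval.isTorsion_of_finiteDimensional ℂ V T
  obtain ⟨ι, fι, p, hp, e, ⟨F⟩⟩ := Module.equiv_directSum_of_isTorsion htor
  letI : Fintype ι := fι
  -- each p i is degree one
  have hdeg : ∀ i, (p i).degree = 1 := fun i =>
    IsAlgClosed.degree_eq_one_of_irreducible ℂ (hp i)
  set lam : ι → ℂ := fun i => -((p i).coeff 0 / (p i).coeff 1) with hlam
  have hcoeff1 : ∀ i, (p i).coeff 1 ≠ 0 := by
    intro i
    have h1 : (p i).natDegree = 1 := natDegree_eq_of_degree_eq_some (hdeg i)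
    have := Polynomial.leadingCoeff_ne_zero.mpr (hp i).ne_zero
    rwa [Polynomial.leadingCoeff, h1] at this
  have hfac : ∀ i, C ((p i).coeff 1) * (X - C (lam i)) = p i := by
    intro i
    have hal : (p i).coeff 1 * lam i = -(p i).coeff 0 := by
      rw [hlam]
      rw [mul_neg, neg_eq_iff_eq_neg, neg_neg, mul_div_assoc', mul_comm,
        mul_div_assoc, div_self (hcoeff1 i), mul_one]
    have hlc : (p i).coeff 1 = (p i).leadingCoeff := by
      rw [Polynomial.leadingCoeff, natDegree_eq_of_degree_eq_some (hdeg i)]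
      norm_num
    conv_rhs => rw [Polynomial.eq_X_add_C_of_degree_eq_one (hdeg i), ← hlc]
    rw [mul_sub, ← C_mul, hal, C_neg, sub_neg_eq_add]
  have hassoc : ∀ i, Associated ((X - C (lam i)) ^ (e i)) (p i ^ (e i)) := by
    intro i
    refine Associated.pow_pow ?_
    exact ⟨(Polynomial.isUnit_C.mpr (hcoeff1 i).isUnit).unit, by
      rw [mul_comm]
      simpa [IsUnit.unit_spec] using hfac i⟩
  -- generators
  set gQ : ∀ i : ι, (DirectSum ι (fun j => ℂ[X] ⧸ (ℂ[X] ∙ (p j ^ e j)))) := fun i =>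
    DirectSum.lof ℂ[X] ι _ i (Submodule.Quotient.mk 1) with hgQ
  set g : ι → V := fun i => (Module.AEval'.of T).symm (F.symm (gQ i)) with hg
  -- H1
  have hofg : ∀ i, F (Module.AEval'.of T (g i)) = gQ i := by
    intro i
    rw [hg]
    show F ((Module.AEval'.of T) ((Module.AEval'.of T).symm (F.symm (gQ i)))) = gQ i
    rw [LinearEquiv.apply_symm_apply, LinearEquiv.apply_symm_apply]
  have H1 : ∀ (i : ι) (f : ℂ[X]), aeval T f (g i) = 0 ↔ (X - C (lam i)) ^ (e i) ∣ f := by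
    intro i f
    have h1 : Module.AEval'.of T (aeval T f (g i)) = f • (Module.AEval'.of T (g i)) := by
      rw [← Module.AEval.of_aeval_smul]
      congr 1
    have h2 : aeval T f (g i) = 0 ↔ f • gQ i = 0 := by
      rw [← LinearEquiv.map_eq_zero_iff (Module.AEval'.of T), h1,
        ← LinearEquiv.map_eq_zero_iff F, map_smul, hofg]
    have hfsmul : (f • (Submodule.Quotient.mk 1 : ℂ[X] ⧸ (ℂ[X] ∙ (p i ^ e i))))
        = Submodule.Quotient.mk f := by
      rw [← Submodule.Quotient.mk_smul, smul_eq_mul, mul_one]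
    have hmk : ((Submodule.Quotient.mk f : ℂ[X] ⧸ (ℂ[X] ∙ (p i ^ e i))) = 0)
        ↔ (X - C (lam i)) ^ (e i) ∣ f := by
      rw [Submodule.Quotient.mk_eq_zero, Submodule.mem_span_singleton]
      constructor
      · rintro ⟨a, rfl⟩
        rw [smul_eq_mul]
        exact ((hassoc i).dvd_iff_dvd_left).mpr (dvd_mul_left _ a)
      · intro hdv
        obtain ⟨c, hc⟩ := ((hassoc i).dvd_iff_dvd_left).mp hdv
        exact ⟨c, by rw [hc, smul_eq_mul, mul_comm]⟩
    rw [h2, hgQ, ← map_smul, hfsmul, ← hmk]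
    constructor
    · intro h
      have h4 := congrArg (fun z => z i) h
      simp only [DirectSum.lof_apply, DirectSum.zero_apply] at h4
      exact h4
    · intro h
      rw [h, map_zero]
  -- block bases
  choose bQ hbQ using fun i => aux_blockBasis (lam i) (p i ^ e i) (e i) (hassoc i)
  let bAll : Basis (Σ i, Fin (e i)) ℂ (DirectSum ι (fun j => ℂ[X] ⧸ (ℂ[X] ∙ (p j ^ e j)))) :=
    DFinsupp.basis bQ
  let eqV : (DirectSum ι (fun j => ℂ[X] ⧸ (ℂ[X] ∙ (p j ^ e j)))) ≃ₗ[ℂ] V :=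
    (F.restrictScalars ℂ).symm.trans (Module.AEval'.of T).symm
  refine ⟨ι, fι, inferInstance, lam, e, g, bAll.map eqV, ?_, H1⟩
  intro i t
  rw [Basis.map_apply]
  have h1 : bAll ⟨i, t⟩ = DFinsupp.single i (bQ i t) := by
    rw [Basis.apply_eq_iff]
    show ((DFinsupp.mapRange.linearEquiv fun j => (bQ j).repr).trans
        (sigmaFinsuppLequivDFinsupp ℂ).symm) (DFinsupp.single i (bQ i t)) = Finsupp.single ⟨i, t⟩ 1
    rw [LinearEquiv.trans_apply, LinearEquiv.symm_apply_eq, sigmaFinsuppLequivDFinsupp_apply]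
    show _ = sigmaFinsuppEquivDFinsupp (Finsupp.single (⟨i, t⟩ : Σ i, Fin (e i)) (1 : ℂ))
    rw [sigmaFinsuppEquivDFinsupp_single]
    simp [DFinsupp.mapRange.linearEquiv_apply, DFinsupp.mapRange_single]
  rw [h1, hbQ i t]
  have h2 : (DFinsupp.single i (Submodule.Quotient.mk ((X - C (lam i)) ^ (t : ℕ)))
        : DirectSum ι (fun j => ℂ[X] ⧸ (ℂ[X] ∙ (p j ^ e j))))
      = ((X - C (lam i)) ^ (t : ℕ)) • gQ i := by
    rw [hgQ, ← map_smul]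
    congr 1
    rw [← Submodule.Quotient.mk_smul, smul_eq_mul, mul_one]
  rw [h2]
  show (Module.AEval'.of T).symm ((LinearEquiv.restrictScalars ℂ F).symm
      (((X - C (lam i)) ^ (t : ℕ)) • gQ i)) = _
  rw [show ((LinearEquiv.restrictScalars ℂ F).symm (((X - C (lam i)) ^ (t : ℕ)) • gQ i))
      = ((X - C (lam i)) ^ (t : ℕ)) • F.symm (gQ i) from map_smul F.symm _ _]
  rw [Module.AEval.of_symm_smul, Module.End.smul_def]
  rfl

end StmtAux


/-- The collection of `c(T)`-invariant subspaces of `V` is closed under subspace sum and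
intersection, and forms a distributive lattice: for `c(T)`-invariant subspaces `A, B, C`
one has `A ∩ (B + C) = (A ∩ B) + (A ∩ C)`. -/
theorem stmt11 (V : Type*) [AddCommGroup V] [Module ℂ V] [FiniteDimensional ℂ V]
    (T : Module.End ℂ V) :
    (∀ A B : Submodule ℂ V,
      (∀ S : Module.End ℂ V, Commute S T → ∀ v ∈ A, S v ∈ A) →
      (∀ S : Module.End ℂ V, Commute S T → ∀ v ∈ B, S v ∈ B) →
      (∀ S : Module.End ℂ V, Commute S T → ∀ v ∈ A ⊔ B, S v ∈ A ⊔ B) ∧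
      (∀ S : Module.End ℂ V, Commute S T → ∀ v ∈ A ⊓ B, S v ∈ A ⊓ B)) ∧
    (∀ A B C : Submodule ℂ V,
      (∀ S : Module.End ℂ V, Commute S T → ∀ v ∈ A, S v ∈ A) →
      (∀ S : Module.End ℂ V, Commute S T → ∀ v ∈ B, S v ∈ B) →
      (∀ S : Module.End ℂ V, Commute S T → ∀ v ∈ C, S v ∈ C) →
      A ⊓ (B ⊔ C) = A ⊓ B ⊔ A ⊓ C) := by
  constructor
  · intro A B hA hB
    constructor
    · intro S hS v hv
      rw [Submodule.mem_sup] at hv ⊢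
      obtain ⟨a, ha, b', hb', rfl⟩ := hv
      exact ⟨S a, hA S hS a ha, S b', hB S hS b' hb', (map_add S a b').symm⟩
    · intro S hS v hv
      exact ⟨hA S hS v hv.1, hB S hS v hv.2⟩
  · intro A B C hA hB hC
    obtain ⟨ι, fι, dι, lam, d, g, b, hb, H1⟩ := aux_exists V T
    haveI := fι
    haveI := dι
    have eA := aux_master T lam d g H1 b hb A hA
    have eB := aux_master T lam d g H1 b hb B hB
    have eC := aux_master T lam d g H1 b hb C hC
    have hmeet : ∀ (S1 S2 : Set (Σ i, Fin (d i))),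
        Submodule.span ℂ (b '' S1) ⊓ Submodule.span ℂ (b '' S2)
          = Submodule.span ℂ (b '' (S1 ∩ S2)) := by
      intro S1 S2
      ext v
      simp only [Submodule.mem_inf, Basis.mem_span_image, Set.subset_inter_iff]
    have hjoin : ∀ (S1 S2 : Set (Σ i, Fin (d i))),
        Submodule.span ℂ (b '' S1) ⊔ Submodule.span ℂ (b '' S2)
          = Submodule.span ℂ (b '' (S1 ∪ S2)) := by
      intro S1 S2
      rw [Set.image_union, Submodule.span_union]
    rw [eA, eB, eC, hjoin, hmeet, hmeet, hmeet, hjoin, Set.inter_union_distrib_left]
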